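/- Let U ⊆ ℝ² be open, x : U → ℝ³ smooth, and Ω = (w₁ w₂) : U → M_{3×2}(ℝ) smooth with w₁(q), w₂(q) linearly independent for every q. Let ξ := (w₁ × w₂)/‖w₁ × w₂‖ : U → S², and suppose ξ is a frontal with Dξ = Ω·Δ_Ωᵀ for a smooth Δ_Ω : U → M₂(ℝ). Set 𝓘_Ω = ΩᵀΩ, 𝓘𝓘_Ω = −ΩᵀDx, and P = [[0,1],[−1,0]]. Then for a smooth curve α : I → U, α(t) = (u₁(t), u₂(t)), the surface of the congruence Y(t,v) = x(α(t)) + v·ξ(α(t)) is developable — that is, det[(x∘α)'(t), (ξ∘α)'(t), ξ(α(t))] = 0 for all t ∈ I — if and only if (u₁'(t), u₂'(t))·P·adj(𝓘𝓘_Ω)·𝓘_Ω·Δ_Ωᵀ (evaluated at α(t))·(u₁'(t), u₂'(t))ᵀ = 0 for all t ∈ I. -/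

import Mathlib

set_option maxHeartbeats 2000000


open Matrix

/-- The triple product `det[a, b, c]` of three vectors of `ℝ³`. -/
noncomputable def tripleProduct (a b c : EuclideanSpace ℝ (Fin 3)) : ℝ :=
  (Matrix.of ![(fun i => a i), (fun i => b i), (fun i => c i)]).det

private lemma key_alg (Ωm Dxm : Matrix (Fin 3) (Fin 2) ℝ) (Δm : Matrix (Fin 2) (Fin 2) ℝ)
    (u1 u2 N : ℝ) (hN : N ≠ 0)
    (a b c : EuclideanSpace ℝ (Fin 3))
    (ha : ∀ i, a i = u1 * Dxm i 0 + u2 * Dxm i 1)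
    (hb : ∀ i, b i = u1 * (Ωm * Δmᵀ) i 0 + u2 * (Ωm * Δmᵀ) i 1)
    (hc : ∀ i, c i = N⁻¹ * (crossProduct (fun i => Ωm i 0) (fun i => Ωm i 1)) i) :
    (tripleProduct a b c = 0 ↔
      ![u1, u2] ⬝ᵥ (!![(0:ℝ),1;-1,0] * (-(Ωmᵀ * Dxm)).adjugate * (Ωmᵀ * Ωm) * Δmᵀ).mulVec
        ![u1, u2] = 0) := by
  have h : tripleProduct a b c =
      N⁻¹ * -(![u1, u2] ⬝ᵥ (!![(0:ℝ),1;-1,0] * (-(Ωmᵀ * Dxm)).adjugate * (Ωmᵀ * Ωm) * Δmᵀ).mulVec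
        ![u1, u2]) := by
    simp only [tripleProduct, det_fin_three, Matrix.of_apply, cross_apply, ha, hb, hc,
      Matrix.mul_apply, Matrix.adjugate_fin_two, dotProduct, Matrix.mulVec,
      Fin.sum_univ_two, Fin.sum_univ_three, Matrix.transpose_apply, Matrix.neg_apply,
      Matrix.cons_val_zero, Matrix.cons_val_one, Matrix.head_cons, Matrix.cons_val_two,
      Matrix.tail_cons, Matrix.head_fin_const, Matrix.cons_val', Matrix.empty_val',
      Matrix.cons_val_fin_one]
    ring
  rw [h, mul_eq_zero, neg_eq_zero, inv_eq_zero, or_iff_right hN]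

/-- a surface of the congruence is developable iff the curve satisfies
the equation of developable surfaces `u'ᵀ·P·adj(𝓘𝓘_Ω)·𝓘_Ω·Δ_Ωᵀ·u' = 0`. -/
theorem stmt_10 (U : Set (ℝ × ℝ)) (hU : IsOpen U)
    (x : ℝ × ℝ → EuclideanSpace ℝ (Fin 3)) (hx : ContDiffOn ℝ (⊤ : ℕ∞) x U)
    (Ω : ℝ × ℝ → Matrix (Fin 3) (Fin 2) ℝ)
    (hΩsmooth : ∀ i j, ContDiffOn ℝ (⊤ : ℕ∞) (fun q => Ω q i j) U)
    (hΩli : ∀ q ∈ U, LinearIndependent ℝ (fun j : Fin 2 => fun i : Fin 3 => Ω q i j))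
    (ξ : ℝ × ℝ → EuclideanSpace ℝ (Fin 3))
    (hξdef : ∀ q ∈ U, ξ q =
      ‖(EuclideanSpace.equiv (Fin 3) ℝ).symm
          (crossProduct (fun i => Ω q i 0) (fun i => Ω q i 1))‖⁻¹ •
        (EuclideanSpace.equiv (Fin 3) ℝ).symm
          (crossProduct (fun i => Ω q i 0) (fun i => Ω q i 1)))
    (Δ : ℝ × ℝ → Matrix (Fin 2) (Fin 2) ℝ)
    (hΔsmooth : ∀ i j, ContDiffOn ℝ (⊤ : ℕ∞) (fun q => Δ q i j) U)
    (hfrontal : ∀ q ∈ U, ∀ i,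
      fderiv ℝ ξ q (1, 0) i = (Ω q * (Δ q)ᵀ) i 0 ∧
      fderiv ℝ ξ q (0, 1) i = (Ω q * (Δ q)ᵀ) i 1)
    (Dx : ℝ × ℝ → Matrix (Fin 3) (Fin 2) ℝ)
    (hDx : ∀ q i, Dx q i 0 = fderiv ℝ x q (1, 0) i ∧ Dx q i 1 = fderiv ℝ x q (0, 1) i)
    (IΩ IIΩ : ℝ × ℝ → Matrix (Fin 2) (Fin 2) ℝ)
    (hIΩ : ∀ q, IΩ q = (Ω q)ᵀ * Ω q) (hIIΩ : ∀ q, IIΩ q = -((Ω q)ᵀ * Dx q))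
    (P : Matrix (Fin 2) (Fin 2) ℝ) (hP : P = !![0, 1; -1, 0])
    (I : Set ℝ) (hI : IsOpen I) (hIc : I.OrdConnected)
    (α : ℝ → ℝ × ℝ) (hα : ContDiffOn ℝ (⊤ : ℕ∞) α I) (hmaps : Set.MapsTo α I U) :
    (∀ t ∈ I, tripleProduct (deriv (x ∘ α) t) (deriv (ξ ∘ α) t) (ξ (α t)) = 0) ↔
    (∀ t ∈ I, ![(deriv α t).1, (deriv α t).2] ⬝ᵥ
        (P * (IIΩ (α t)).adjugate * IΩ (α t) * (Δ (α t))ᵀ).mulVec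
          ![(deriv α t).1, (deriv α t).2] = 0) := by
  have main : ∀ t ∈ I,
      (tripleProduct (deriv (x ∘ α) t) (deriv (ξ ∘ α) t) (ξ (α t)) = 0 ↔
        ![(deriv α t).1, (deriv α t).2] ⬝ᵥ
          (P * (IIΩ (α t)).adjugate * IΩ (α t) * (Δ (α t))ᵀ).mulVec
            ![(deriv α t).1, (deriv α t).2] = 0) := by
    intro t ht
    set q : ℝ × ℝ := α t with hq
    have hqU : q ∈ U := hmaps ht
    -- derivative of α
    have hαd : DifferentiableAt ℝ α t :=
      (hα.contDiffAt (hI.mem_nhds ht)).differentiableAt (by simp)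
    have hαder : HasDerivAt α (deriv α t) t := hαd.hasDerivAt
    set u1 : ℝ := (deriv α t).1
    set u2 : ℝ := (deriv α t).2
    have hu : deriv α t = u1 • ((1:ℝ), (0:ℝ)) + u2 • ((0:ℝ), (1:ℝ)) := by
      simp [Prod.ext_iff]
      exact ⟨rfl, rfl⟩
    -- x part
    have hxd : DifferentiableAt ℝ x q :=
      (hx.contDiffAt (hU.mem_nhds hqU)).differentiableAt (by simp)
    have hxcomp : deriv (x ∘ α) t = fderiv ℝ x q (deriv α t) :=
      (hxd.hasFDerivAt.comp_hasDerivAt t hαder).deriv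
    have ha : ∀ i, deriv (x ∘ α) t i = u1 * Dx q i 0 + u2 * Dx q i 1 := by
      intro i
      rw [hxcomp, hu, map_add]
      simp only [_root_.map_smul, PiLp.add_apply, PiLp.smul_apply, smul_eq_mul,
        ← (hDx q i).1, ← (hDx q i).2]
    -- ξ differentiability
    have hΩd : ∀ i j, DifferentiableAt ℝ (fun p => Ω p i j) q := fun i j =>
      ((hΩsmooth i j).contDiffAt (hU.mem_nhds hqU)).differentiableAt (by simp)
    have hcrossd : DifferentiableAt ℝ
        (fun p => (EuclideanSpace.equiv (Fin 3) ℝ).symm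
          (crossProduct (fun i => Ω p i 0) (fun i => Ω p i 1))) q := by
      apply ((EuclideanSpace.equiv (Fin 3) ℝ).symm.differentiableAt).comp
      rw [differentiableAt_pi]
      intro i
      have : (fun p => crossProduct (fun i => Ω p i 0) (fun i => Ω p i 1) i) =
          (fun p => ![Ω p 1 0 * Ω p 2 1 - Ω p 2 0 * Ω p 1 1,
            Ω p 2 0 * Ω p 0 1 - Ω p 0 0 * Ω p 2 1,
            Ω p 0 0 * Ω p 1 1 - Ω p 1 0 * Ω p 0 1] i) := by
        funext p
        rw [cross_apply]
      rw [this]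
      fin_cases i <;> simp <;>
        exact ((hΩd _ _).mul (hΩd _ _)).sub ((hΩd _ _).mul (hΩd _ _))
    have hcrossne : (EuclideanSpace.equiv (Fin 3) ℝ).symm
        (crossProduct (fun i => Ω q i 0) (fun i => Ω q i 1)) ≠ 0 := by
      rw [map_ne_zero_iff _ (EuclideanSpace.equiv (Fin 3) ℝ).symm.injective]
      rw [crossProduct_ne_zero_iff_linearIndependent]
      have := hΩli q hqU
      convert this using 1
      funext j
      fin_cases j <;> rfl
      rfl
    set N : ℝ := ‖(EuclideanSpace.equiv (Fin 3) ℝ).symm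
        (crossProduct (fun i => Ω q i 0) (fun i => Ω q i 1))‖ with hN
    have hNne : N ≠ 0 := norm_ne_zero_iff.mpr hcrossne
    have hnormd : DifferentiableAt ℝ (fun p => ‖(EuclideanSpace.equiv (Fin 3) ℝ).symm
        (crossProduct (fun i => Ω p i 0) (fun i => Ω p i 1))‖) q :=
      DifferentiableAt.norm ℝ hcrossd hcrossne
    have hgd : DifferentiableAt ℝ (fun p =>
        ‖(EuclideanSpace.equiv (Fin 3) ℝ).symm
            (crossProduct (fun i => Ω p i 0) (fun i => Ω p i 1))‖⁻¹ •
          (EuclideanSpace.equiv (Fin 3) ℝ).symm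
            (crossProduct (fun i => Ω p i 0) (fun i => Ω p i 1))) q :=
      (hnormd.inv hNne).smul hcrossd
    have hξd : DifferentiableAt ℝ ξ q := by
      apply hgd.congr_of_eventuallyEq
      filter_upwards [hU.mem_nhds hqU] with p hp
      exact hξdef p hp
    have hξcomp : deriv (ξ ∘ α) t = fderiv ℝ ξ q (deriv α t) :=
      (hξd.hasFDerivAt.comp_hasDerivAt t hαder).deriv
    have hb : ∀ i, deriv (ξ ∘ α) t i =
        u1 * (Ω q * (Δ q)ᵀ) i 0 + u2 * (Ω q * (Δ q)ᵀ) i 1 := by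
      intro i
      rw [hξcomp, hu, map_add]
      simp only [_root_.map_smul, PiLp.add_apply, PiLp.smul_apply, smul_eq_mul,
        (hfrontal q hqU i).1, (hfrontal q hqU i).2]
    have hc : ∀ i, ξ q i =
        N⁻¹ * (crossProduct (fun i => Ω q i 0) (fun i => Ω q i 1)) i := by
      intro i
      rw [hξdef q hqU]
      simp only [PiLp.smul_apply, smul_eq_mul, ← hN]
      congr 1
    rw [hP, hIΩ, hIIΩ]
    exact key_alg (Ω q) (Dx q) (Δ q) u1 u2 N hNne _ _ _ ha hb hc
  constructor
  · intro h t ht; exact (main t ht).mp (h t ht)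
  · intro h t ht; exact (main t ht).mpr (h t ht)
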